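/- Consider the continuous torus ℝ^n/2ℤ^n and unit cubes t + [0,1)^n for t ∈ ℝ^n/2ℤ^n. Two such cubes t + [0,1)^n and t' + [0,1)^n are disjoint if and only if there exists a coordinate i such that t_i - t'_i ≡ 1 (mod 2), i.e., t_i - t'_i lifts to an odd integer. -/
import Mathlib

/-- The unit cube `t + [0,1)^n` in the continuous torus `(ℝ/2ℤ)^n`. -/
def cubeC {n : ℕ} (t : Fin n → AddCircle (2 : ℝ)) : Set (Fin n → AddCircle (2 : ℝ)) :=
  {x | ∀ i, ∃ r : ℝ, 0 ≤ r ∧ r < 1 ∧ x i = t i + (r : AddCircle (2 : ℝ))}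

private lemma coe_eq_coe_iff' (x y : ℝ) :
    (x : AddCircle (2 : ℝ)) = y ↔ ∃ m : ℤ, x - y = m * 2 := by
  rw [QuotientAddGroup.eq_iff_sub_mem]
  constructor
  · rintro h
    obtain ⟨m, hm⟩ := AddSubgroup.mem_zmultiples_iff.mp h
    exact ⟨m, by rw [← hm, zsmul_eq_mul]⟩
  · rintro ⟨m, hm⟩
    exact AddSubgroup.mem_zmultiples_iff.mpr ⟨m, by rw [hm, zsmul_eq_mul]⟩

private lemma dim1 (a b : AddCircle (2 : ℝ))
    (h : ¬ ∃ k : ℤ, Odd k ∧ a - b = ((k : ℝ) : AddCircle (2 : ℝ))) :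
    ∃ r s : ℝ, 0 ≤ r ∧ r < 1 ∧ 0 ≤ s ∧ s < 1 ∧
      a + (r : AddCircle (2 : ℝ)) = b + (s : AddCircle (2 : ℝ)) := by
  obtain ⟨x, hx⟩ := QuotientAddGroup.mk_surjective (a - b)
  have h2 : (0 : ℝ) < 2 := two_pos
  set c := toIcoMod h2 0 x with hc
  have hmem := toIcoMod_mem_Ico h2 0 x
  rw [zero_add] at hmem
  have hcd : (c : AddCircle (2 : ℝ)) = a - b := by
    rw [← hx, coe_eq_coe_iff']
    exact ⟨-(toIcoDiv h2 0 x), by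
      have := self_sub_toIcoDiv_zsmul h2 0 x
      rw [zsmul_eq_mul] at this
      push_cast
      linarith [this]⟩
  have hcne : c ≠ 1 := by
    intro hc1
    exact h ⟨1, odd_one, by rw [← hcd, hc1]; norm_num⟩
  have key : a = b + (c : AddCircle (2:ℝ)) := by rw [hcd]; abel
  rcases lt_or_gt_of_ne hcne with hlt | hgt
  · refine ⟨0, c, le_refl _, one_pos, hmem.1, hlt, ?_⟩
    rw [key, QuotientAddGroup.mk_zero, add_zero]
  · refine ⟨2 - c, 0, by linarith [hmem.2], by linarith, le_refl _, one_pos, ?_⟩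
    rw [key, QuotientAddGroup.mk_zero, add_zero, add_assoc, ← AddCircle.coe_add]
    have h22 : c + (2 - c) = 2 := by ring
    rw [h22, AddCircle.coe_period, add_zero]

theorem cubesC_disjoint_iff {n : ℕ} (t t' : Fin n → AddCircle (2 : ℝ)) :
    Disjoint (cubeC t) (cubeC t') ↔
      ∃ i, ∃ k : ℤ, Odd k ∧ t i - t' i = ((k : ℝ) : AddCircle (2 : ℝ)) := by
  constructor
  · intro hd
    by_contra hne
    push_neg at hne
    apply Set.not_disjoint_iff.mpr _ hd
    choose r s hr0 hr1 hs0 hs1 heq using fun i =>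
      dim1 (t i) (t' i) (by
        intro ⟨k, hk, hkeq⟩
        exact (hne i k hk) hkeq)
    refine ⟨fun i => t i + (r i : AddCircle (2:ℝ)), fun i => ⟨r i, hr0 i, hr1 i, rfl⟩,
      fun i => ⟨s i, hs0 i, hs1 i, heq i⟩⟩
  · rintro ⟨i, k, hk, hkeq⟩
    rw [Set.disjoint_left]
    rintro x hx hx'
    obtain ⟨r, hr0, hr1, hxr⟩ := hx i
    obtain ⟨s, hs0, hs1, hxs⟩ := hx' i
    have : ((k : ℝ) : AddCircle (2:ℝ)) + (r : ℝ) = (s : ℝ) := by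
      rw [← hkeq]
      have := hxr.symm.trans hxs
      have h2 : t i = t' i + (s : ℝ) - (r : ℝ) := by
        rw [← this]; abel
      rw [h2]; abel
    rw [← AddCircle.coe_add, coe_eq_coe_iff'] at this
    obtain ⟨m, hm⟩ := this
    have hcast : ((m * 2 - k : ℤ) : ℝ) = r - s := by push_cast; linarith
    have h1 : -1 < ((m * 2 - k : ℤ) : ℝ) := by rw [hcast]; linarith
    have h2 : ((m * 2 - k : ℤ) : ℝ) < 1 := by rw [hcast]; linarith
    have h1' : -1 < m * 2 - k := by exact_mod_cast h1
    have h2' : m * 2 - k < 1 := by exact_mod_cast h2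
    obtain ⟨j, hj⟩ := hk
    omega
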